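/- Let N ∈ 𝔑(a,b), G a cost function and β ∈ I_G. Let g₁, g₂ : (a,b) → ℝ be Lebesgue-a.e. differentiable with g₁' > −1 and g₂' > −1 a.e. in (a,b), satisfying E G(g_i(N)) ≤ β and ∫_a^b p_N |ln(1+g_i')| dn < ∞ for i = 1, 2, and let α₁, α₂ > 0 with α₁ + α₂ = 1. Then the convex combination g := α₁g₁ + α₂g₂ is Lebesgue-a.e. differentiable with g' > −1 a.e., satisfies E G(g(N)) ≤ β and ∫_a^b p_N |ln(1+g')| dn < ∞, and the entropy functional is concave: ∫_a^b p_N ln(1 + α₁g₁' + α₂g₂') dn ≥ α₁ ∫_a^b p_N ln(1+g₁') dn + α₂ ∫_a^b p_N ln(1+g₂') dn. -/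

import Mathlib

open MeasureTheory Real Filter Set
open scoped ENNReal Topology ProbabilityTheory

noncomputable section

variable {Ω : Type*} [MeasureSpace Ω]

/-- `Z` has a law absolutely continuous w.r.t. Lebesgue measure, with density `p`. -/
def HasDens (Z : Ω → ℝ) (p : ℝ → ℝ) : Prop :=
  Measurable Z ∧ Measurable p ∧ (∀ x, 0 ≤ p x) ∧
    Measure.map Z (ℙ : Measure Ω) = volume.withDensity (fun x => ENNReal.ofReal (p x))

/-- Differential entropy of a density: `h = -∫ p ln p`. -/
def dEnt (p : ℝ → ℝ) : ℝ := -∫ y, p y * Real.log (p y)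

/-- The differential entropy of the density `p` is well defined: `∫ p |ln p| < ∞`. -/
def EntWellDef (p : ℝ → ℝ) : Prop := Integrable (fun y => p y * Real.log (p y))

/-- The real points of the open interval `(a,b)` with extended-real endpoints. -/
def eIoo (a b : EReal) : Set ℝ := {x : ℝ | a < (x : EReal) ∧ (x : EReal) < b}

/-- The noise class `𝔑(a,b)`: `N` takes values in the closure of `(a,b)`, is integrable,
has a Lebesgue density `pN` which is `C¹` and strictly positive on `(a,b)` and vanishes
outside, and has well-defined differential entropy. -/
structure IsNoise (a b : EReal) (N : Ω → ℝ) (pN : ℝ → ℝ) : Prop where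
  prob : IsProbabilityMeasure (ℙ : Measure Ω)
  lt : a < b
  mem : ∀ᵐ ω ∂(ℙ : Measure Ω), a ≤ (N ω : EReal) ∧ (N ω : EReal) ≤ b
  int : Integrable N (ℙ : Measure Ω)
  dens : HasDens N pN
  smooth : ContDiffOn ℝ 1 pN (eIoo a b)
  pos : ∀ x ∈ eIoo a b, 0 < pN x
  zero : ∀ x ∉ eIoo a b, pN x = 0
  went : EntWellDef pN

/-- Cost function: `C¹`, convex, with derivative a.e. nonzero. -/
structure IsCost (G : ℝ → ℝ) : Prop where
  smooth : ContDiff ℝ 1 G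
  convex : ConvexOn ℝ Set.univ G
  dne : ∀ᵐ x ∂(volume : Measure ℝ), deriv G x ≠ 0

/-- `β ∈ I_G = (inf G, ∞)`, i.e. `β` is strictly above the infimum of `G`. -/
def InIG (G : ℝ → ℝ) (β : ℝ) : Prop := ∃ x, G x < β

/-- Admissible input: integrable, with integrable cost and average cost at most `β`. -/
def Admissible (G : ℝ → ℝ) (β : ℝ) (X : Ω → ℝ) : Prop :=
  Measurable X ∧ Integrable X (ℙ : Measure Ω) ∧
    Integrable (fun ω => G (X ω)) (ℙ : Measure Ω) ∧
    (∫ ω, G (X ω) ∂(ℙ : Measure Ω)) ≤ β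

/-- The set of achievable output entropies `{h(Y) : Y ∈ Σ(N;G,β)}` (joint couplings). -/
def SigmaEnt (N : Ω → ℝ) (G : ℝ → ℝ) (β : ℝ) : Set ℝ :=
  {h | ∃ (X : Ω → ℝ) (pY : ℝ → ℝ), Admissible G β X ∧
        HasDens (fun ω => X ω + N ω) pY ∧ EntWellDef pY ∧ h = dEnt pY}

/-- The set of achievable output entropies `{h(Y) : Y ∈ Σ_⊥(N;G,β)}` (independent input). -/
def SigmaEntIndep (N : Ω → ℝ) (G : ℝ → ℝ) (β : ℝ) : Set ℝ :=
  {h | ∃ (X : Ω → ℝ) (pY : ℝ → ℝ), Admissible G β X ∧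
        ProbabilityTheory.IndepFun X N (ℙ : Measure Ω) ∧
        HasDens (fun ω => X ω + N ω) pY ∧ EntWellDef pY ∧ h = dEnt pY}

/-- Achievable output entropies with an additional amplitude constraint `X ∈ s` a.s. -/
def SigmaEntAmp (N : Ω → ℝ) (G : ℝ → ℝ) (β : ℝ) (s : Set ℝ) : Set ℝ :=
  {h | ∃ (X : Ω → ℝ) (pY : ℝ → ℝ), Admissible G β X ∧
        (∀ᵐ ω ∂(ℙ : Measure Ω), X ω ∈ s) ∧
        HasDens (fun ω => X ω + N ω) pY ∧ EntWellDef pY ∧ h = dEnt pY}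

/-- The filter of real numbers approaching the extended-real endpoint `a` from the right. -/
def rightNhds (a : EReal) : Filter ℝ :=
  Filter.comap (fun x : ℝ => (x : EReal)) (nhdsWithin a (Set.Ioi a))

/-- The filter of real numbers approaching the extended-real endpoint `b` from the left. -/
def leftNhds (b : EReal) : Filter ℝ :=
  Filter.comap (fun x : ℝ => (x : EReal)) (nhdsWithin b (Set.Iio b))

/-- The hypotheses of Theorem 1: constants `C, λ > 0`, a `C¹` curve `g` with derivative `g'`
and a primitive `Φ` of `G' ∘ g`, satisfying the first integral of the Euler–Lagrange
equation, the natural boundary conditions, the isoperimetric constraint `E G(g(N)) = β`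
and `E|g(N)| < ∞`. -/
structure FirstIntegral (a b : EReal) (N : Ω → ℝ) (pN G : ℝ → ℝ) (β : ℝ)
    (C lam : ℝ) (g g' Φ : ℝ → ℝ) : Prop where
  hC : 0 < C
  hlam : 0 < lam
  hgmeas : Measurable g
  hg : ∀ n ∈ eIoo a b, HasDerivAt g (g' n) n
  hg' : ContinuousOn g' (eIoo a b)
  hΦ : ∀ n ∈ eIoo a b, HasDerivAt Φ (deriv G (g n)) n
  heq : ∀ n ∈ eIoo a b, pN n = C * (1 + g' n) * Real.exp (-(lam * (Φ n + G (g n))))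
  hbl : Filter.Tendsto (fun n => pN n / (1 + g' n))
    (rightNhds a ⊓ Filter.principal (eIoo a b)) (nhds 0)
  hbr : Filter.Tendsto (fun n => pN n / (1 + g' n))
    (leftNhds b ⊓ Filter.principal (eIoo a b)) (nhds 0)
  hGint : Integrable (fun ω => G (g (N ω))) (ℙ : Measure Ω)
  hcost : (∫ ω, G (g (N ω)) ∂(ℙ : Measure Ω)) = β
  hgint : Integrable (fun ω => g (N ω)) (ℙ : Measure Ω)

/-- Fourier transform of a finite Borel measure on `ℝ`: `F[μ](f) = ∫ e^{-2πifξ} dμ(ξ)`. -/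
def charF (μ : Measure ℝ) (f : ℝ) : ℂ :=
  ∫ ξ, Complex.exp (Complex.ofReal (-(2 * Real.pi * f * ξ)) * Complex.I) ∂μ

/-- Positive definiteness of a complex-valued function on `ℝ`: every Hermitian sum
`∑_{l,m} φ(f_l - f_m) z_l z̄_m` is a nonnegative real number. -/
def PosDefFn (φ : ℝ → ℂ) : Prop :=
  ∀ (n : ℕ) (f : Fin n → ℝ) (z : Fin n → ℂ),
    0 ≤ (∑ l, ∑ m, φ (f l - f m) * z l * (starRingEnd ℂ) (z m)).re ∧
    (∑ l, ∑ m, φ (f l - f m) * z l * (starRingEnd ℂ) (z m)).im = 0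


/-- A convex `C¹` function on `ℝ` is bounded below on any segment by
`-(K + |G x| + |G y|)` where `x, y` are the endpoints and `K` is a universal constant. -/
lemma convex_segment_lower_bound (G : ℝ → ℝ) (hsm : ContDiff ℝ 1 G)
    (hcv : ConvexOn ℝ Set.univ G) :
    ∃ K : ℝ, 0 ≤ K ∧ ∀ z x y : ℝ, min x y ≤ z → z ≤ max x y →
      -(K + |G x| + |G y|) ≤ G z := by
  have hd : Differentiable ℝ G := hsm.differentiable one_ne_zero
  by_cases h : ∃ t, deriv G t = 0
  · obtain ⟨t, ht⟩ := h
    have hmin : ∀ z, G t ≤ G z := by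
      intro z
      rcases lt_trichotomy z t with h1 | h1 | h1
      · have := hcv.slope_le_deriv (Set.mem_univ z) (Set.mem_univ t) h1 (hd t)
        rw [ht, slope_def_field, div_nonpos_iff] at this
        rcases this with ⟨h2, h3⟩ | ⟨h2, h3⟩
        · linarith
        · linarith
      · simp [h1]
      · have := hcv.deriv_le_slope (Set.mem_univ t) (Set.mem_univ z) h1 (hd t)
        rw [ht, slope_def_field, div_nonneg_iff] at this
        rcases this with ⟨h2, h3⟩ | ⟨h2, h3⟩
        · linarith
        · linarith
    refine ⟨|G t|, abs_nonneg _, fun z x y _ _ => ?_⟩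
    have h1 := hmin z
    have h2 := neg_abs_le (G t)
    have h3 := abs_nonneg (G x)
    have h4 := abs_nonneg (G y)
    linarith
  · push_neg at h
    have hcont : Continuous (deriv G) := hsm.continuous_deriv le_rfl
    have hsign : (∀ x, 0 < deriv G x) ∨ (∀ x, deriv G x < 0) := by
      by_cases h0 : 0 < deriv G 0
      · left
        intro x
        by_contra hx
        push_neg at hx
        have hx' : deriv G x < 0 := lt_of_le_of_ne hx (h x)
        have h0' : (0 : ℝ) ∈ Set.uIcc (deriv G x) (deriv G 0) :=
          Set.mem_uIcc.2 (Or.inl ⟨hx'.le, h0.le⟩)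
        obtain ⟨t, _, ht⟩ := intermediate_value_uIcc (hcont.continuousOn) h0'
        exact h t ht
      · right
        intro x
        by_contra hx
        push_neg at hx
        have hx' : 0 < deriv G x := lt_of_le_of_ne hx (Ne.symm (h x))
        have h00 : deriv G 0 < 0 := lt_of_le_of_ne (le_of_not_gt h0) (h 0)
        have h0' : (0 : ℝ) ∈ Set.uIcc (deriv G x) (deriv G 0) :=
          Set.mem_uIcc.2 (Or.inr ⟨h00.le, hx'.le⟩)
        obtain ⟨t, _, ht⟩ := intermediate_value_uIcc (hcont.continuousOn) h0'
        exact h t ht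
    refine ⟨0, le_rfl, fun z x y hz1 hz2 => ?_⟩
    have key : min (G x) (G y) ≤ G z := by
      rcases hsign with hpos | hneg
      · have hmono : StrictMono G := strictMono_of_deriv_pos hpos
        calc min (G x) (G y) = G (min x y) := (hmono.monotone.map_min).symm
          _ ≤ G z := hmono.monotone hz1
      · have hanti : StrictAnti G := strictAnti_of_deriv_neg hneg
        calc min (G x) (G y) = G (max x y) := (hanti.antitone.map_max).symm
          _ ≤ G z := hanti.antitone hz2
    have h3 := neg_abs_le (G x)
    have h4 := neg_abs_le (G y)
    have h5 := abs_nonneg (G x)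
    have h6 := abs_nonneg (G y)
    rcases min_le_iff.1 (le_refl (min (G x) (G y))) with h7 | h7 <;>
      rcases le_min_iff.1 (le_refl (min (G x) (G y))) with ⟨h8, h9⟩ <;> linarith

/-- concavity of the constrained entropy functional: a convex
combination of two admissible curves is again admissible (a.e. differentiable with
derivative `> −1`, average cost at most `β` and finite entropy integral), and the
entropy functional is concave:
`∫ p_N ln(1 + α₁g₁' + α₂g₂') ≥ α₁ ∫ p_N ln(1+g₁') + α₂ ∫ p_N ln(1+g₂')`. -/
theorem entropy_functional_concavity
    {Ω : Type*} [MeasureSpace Ω]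
    (a b : EReal) (N : Ω → ℝ) (pN G : ℝ → ℝ) (β : ℝ)
    (hN : IsNoise a b N pN) (hG : IsCost G) (hβ : InIG G β)
    (g₁ g₂ g₁' g₂' : ℝ → ℝ)
    (hmeas₁ : Measurable g₁) (hmeas₂ : Measurable g₂)
    (hd₁ : ∀ᵐ n ∂(volume.restrict (eIoo a b)), HasDerivAt g₁ (g₁' n) n ∧ -1 < g₁' n)
    (hd₂ : ∀ᵐ n ∂(volume.restrict (eIoo a b)), HasDerivAt g₂ (g₂' n) n ∧ -1 < g₂' n)
    (hc₁ : Integrable (fun ω => G (g₁ (N ω))) (ℙ : Measure Ω) ∧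
      (∫ ω, G (g₁ (N ω)) ∂(ℙ : Measure Ω)) ≤ β)
    (hc₂ : Integrable (fun ω => G (g₂ (N ω))) (ℙ : Measure Ω) ∧
      (∫ ω, G (g₂ (N ω)) ∂(ℙ : Measure Ω)) ≤ β)
    (hi₁ : IntegrableOn (fun n => pN n * |Real.log (1 + g₁' n)|) (eIoo a b))
    (hi₂ : IntegrableOn (fun n => pN n * |Real.log (1 + g₂' n)|) (eIoo a b))
    (α₁ α₂ : ℝ) (hα₁ : 0 < α₁) (hα₂ : 0 < α₂) (hsum : α₁ + α₂ = 1) :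
    (∀ᵐ n ∂(volume.restrict (eIoo a b)),
      HasDerivAt (fun x => α₁ * g₁ x + α₂ * g₂ x) (α₁ * g₁' n + α₂ * g₂' n) n ∧
      -1 < α₁ * g₁' n + α₂ * g₂' n) ∧
    (Integrable (fun ω => G (α₁ * g₁ (N ω) + α₂ * g₂ (N ω))) (ℙ : Measure Ω) ∧
      (∫ ω, G (α₁ * g₁ (N ω) + α₂ * g₂ (N ω)) ∂(ℙ : Measure Ω)) ≤ β) ∧
    IntegrableOn (fun n => pN n * |Real.log (1 + (α₁ * g₁' n + α₂ * g₂' n))|) (eIoo a b) ∧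
    α₁ * (∫ n in eIoo a b, pN n * Real.log (1 + g₁' n)) +
        α₂ * (∫ n in eIoo a b, pN n * Real.log (1 + g₂' n)) ≤
      ∫ n in eIoo a b, pN n * Real.log (1 + (α₁ * g₁' n + α₂ * g₂' n)) := by
  haveI : IsProbabilityMeasure (ℙ : Measure Ω) := hN.prob
  have hα₁1 : α₁ ≤ 1 := by linarith
  have hα₂1 : α₂ ≤ 1 := by linarith
  have hNmeas : Measurable N := hN.dens.1
  have hpm : Measurable pN := hN.dens.2.1
  have hpnn : ∀ x, 0 ≤ pN x := hN.dens.2.2.1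
  -- Part 1: a.e. differentiability with derivative > -1
  have part1 : ∀ᵐ n ∂(volume.restrict (eIoo a b)),
      HasDerivAt (fun x => α₁ * g₁ x + α₂ * g₂ x) (α₁ * g₁' n + α₂ * g₂' n) n ∧
      -1 < α₁ * g₁' n + α₂ * g₂' n := by
    filter_upwards [hd₁, hd₂] with n h1 h2
    refine ⟨(h1.1.const_mul α₁).add (h2.1.const_mul α₂), ?_⟩
    nlinarith [h1.2, h2.2]
  -- Jensen's inequality pointwise
  have jensen : ∀ x y : ℝ, G (α₁ * x + α₂ * y) ≤ α₁ * G x + α₂ * G y := by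
    intro x y
    have := hG.convex.2 (Set.mem_univ x) (Set.mem_univ y) hα₁.le hα₂.le hsum
    simpa [smul_eq_mul] using this
  obtain ⟨K, hK0, hKbound⟩ := convex_segment_lower_bound G hG.smooth hG.convex
  -- the combination lies in the segment
  have hseg : ∀ x y : ℝ, min x y ≤ α₁ * x + α₂ * y ∧ α₁ * x + α₂ * y ≤ max x y := by
    intro x y
    constructor
    · calc min x y = α₁ * min x y + α₂ * min x y := by linear_combination (-(min x y)) * hsum
        _ ≤ α₁ * x + α₂ * y :=
          add_le_add (mul_le_mul_of_nonneg_left (min_le_left x y) hα₁.le)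
            (mul_le_mul_of_nonneg_left (min_le_right x y) hα₂.le)
    · calc α₁ * x + α₂ * y ≤ α₁ * max x y + α₂ * max x y :=
          add_le_add (mul_le_mul_of_nonneg_left (le_max_left x y) hα₁.le)
            (mul_le_mul_of_nonneg_left (le_max_right x y) hα₂.le)
        _ = max x y := by linear_combination (max x y) * hsum
  -- uniform bound on |G (α₁ x + α₂ y)|
  have habs : ∀ x y : ℝ, |G (α₁ * x + α₂ * y)| ≤ |G x| + |G y| + K := by
    intro x y
    have h1 := hKbound (α₁ * x + α₂ * y) x y (hseg x y).1 (hseg x y).2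
    have h2 := jensen x y
    have h3 := le_abs_self (G x)
    have h4 := le_abs_self (G y)
    have h5 := abs_nonneg (G x)
    have h6 := abs_nonneg (G y)
    rw [abs_le]
    constructor
    · linarith
    · nlinarith [mul_le_mul_of_nonneg_left h3 hα₁.le, mul_le_mul_of_nonneg_left h4 hα₂.le,
        mul_le_mul_of_nonneg_right hα₁1 h5, mul_le_mul_of_nonneg_right hα₂1 h6]
  -- Part 2: integrability of the cost and average cost bound
  have hmeasc : Measurable fun ω => α₁ * g₁ (N ω) + α₂ * g₂ (N ω) :=
    ((hmeas₁.comp hNmeas).const_mul α₁).add ((hmeas₂.comp hNmeas).const_mul α₂)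
  have hintc : Integrable (fun ω => G (α₁ * g₁ (N ω) + α₂ * g₂ (N ω))) (ℙ : Measure Ω) := by
    refine Integrable.mono' ((hc₁.1.abs.add hc₂.1.abs).add (integrable_const K))
      (hG.smooth.continuous.measurable.comp hmeasc).aestronglyMeasurable
      (ae_of_all _ fun ω => ?_)
    simpa [Real.norm_eq_abs] using habs (g₁ (N ω)) (g₂ (N ω))
  have hcostle : (∫ ω, G (α₁ * g₁ (N ω) + α₂ * g₂ (N ω)) ∂(ℙ : Measure Ω)) ≤ β := by
    have h1 : (∫ ω, G (α₁ * g₁ (N ω) + α₂ * g₂ (N ω)) ∂(ℙ : Measure Ω)) ≤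
        ∫ ω, (α₁ * G (g₁ (N ω)) + α₂ * G (g₂ (N ω))) ∂(ℙ : Measure Ω) :=
      integral_mono_ae hintc ((hc₁.1.const_mul α₁).add (hc₂.1.const_mul α₂))
        (ae_of_all _ fun ω => jensen (g₁ (N ω)) (g₂ (N ω)))
    rw [integral_add (hc₁.1.const_mul α₁) (hc₂.1.const_mul α₂), integral_const_mul,
      integral_const_mul] at h1
    have hβeq : α₁ * β + α₂ * β = β := by linear_combination β * hsum
    linarith [mul_le_mul_of_nonneg_left hc₁.2 hα₁.le,
      mul_le_mul_of_nonneg_left hc₂.2 hα₂.le]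
  -- measurability of the derivatives
  set μ := volume.restrict (eIoo a b) with hμ
  have hg₁'ae : AEMeasurable g₁' μ := by
    refine (measurable_deriv g₁).aemeasurable.congr ?_
    filter_upwards [hd₁] with n h using (h.1.deriv)
  have hg₂'ae : AEMeasurable g₂' μ := by
    refine (measurable_deriv g₂).aemeasurable.congr ?_
    filter_upwards [hd₂] with n h using (h.1.deriv)
  have hlog₁ : AEMeasurable (fun n => Real.log (1 + g₁' n)) μ :=
    Real.measurable_log.comp_aemeasurable (aemeasurable_const.add hg₁'ae)
  have hlog₂ : AEMeasurable (fun n => Real.log (1 + g₂' n)) μ :=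
    Real.measurable_log.comp_aemeasurable (aemeasurable_const.add hg₂'ae)
  have hlogc : AEMeasurable (fun n => Real.log (1 + (α₁ * g₁' n + α₂ * g₂' n))) μ :=
    Real.measurable_log.comp_aemeasurable
      (aemeasurable_const.add ((hg₁'ae.const_mul α₁).add (hg₂'ae.const_mul α₂)))
  -- integrability of pN * log(1 + gᵢ')
  have habs_eq : ∀ (f : ℝ → ℝ) (n : ℝ), ‖pN n * Real.log (f n)‖ = pN n * |Real.log (f n)| := by
    intro f n
    rw [Real.norm_eq_abs, abs_mul, abs_of_nonneg (hpnn n)]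
  have hint₁ : Integrable (fun n => pN n * Real.log (1 + g₁' n)) μ := by
    refine Integrable.mono' hi₁ (hpm.aemeasurable.mul hlog₁).aestronglyMeasurable
      (ae_of_all _ fun n => le_of_eq (habs_eq (fun n => 1 + g₁' n) n))
  have hint₂ : Integrable (fun n => pN n * Real.log (1 + g₂' n)) μ := by
    refine Integrable.mono' hi₂ (hpm.aemeasurable.mul hlog₂).aestronglyMeasurable
      (ae_of_all _ fun n => le_of_eq (habs_eq (fun n => 1 + g₂' n) n))
  -- key pointwise log estimates
  have hlogkey : ∀ᵐ n ∂μ,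
      α₁ * Real.log (1 + g₁' n) + α₂ * Real.log (1 + g₂' n) ≤
        Real.log (1 + (α₁ * g₁' n + α₂ * g₂' n)) ∧
      |Real.log (1 + (α₁ * g₁' n + α₂ * g₂' n))| ≤
        |Real.log (1 + g₁' n)| + |Real.log (1 + g₂' n)| := by
    filter_upwards [hd₁, hd₂] with n h1 h2
    set u := 1 + g₁' n with hu
    set v := 1 + g₂' n with hv
    have hu0 : 0 < u := by simp only [hu]; linarith [h1.2]
    have hv0 : 0 < v := by simp only [hv]; linarith [h2.2]
    have hw : 1 + (α₁ * g₁' n + α₂ * g₂' n) = α₁ * u + α₂ * v := by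
      simp only [hu, hv]; ring_nf; nlinarith [hsum]
    have hw0 : 0 < α₁ * u + α₂ * v := by positivity
    have hconc : α₁ * Real.log u + α₂ * Real.log v ≤ Real.log (α₁ * u + α₂ * v) := by
      have := strictConcaveOn_log_Ioi.concaveOn.2 (Set.mem_Ioi.2 hu0) (Set.mem_Ioi.2 hv0)
        hα₁.le hα₂.le hsum
      simpa [smul_eq_mul] using this
    have hupper : Real.log (α₁ * u + α₂ * v) ≤ |Real.log u| + |Real.log v| := by
      have hle : α₁ * u + α₂ * v ≤ max u v := by
        nlinarith [le_max_left u v, le_max_right u v]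
      have := Real.log_le_log hw0 hle
      have hmax : Real.log (max u v) ≤ |Real.log u| + |Real.log v| := by
        rcases le_total u v with h | h
        · rw [max_eq_right h]
          nlinarith [le_abs_self (Real.log v), abs_nonneg (Real.log u)]
        · rw [max_eq_left h]
          nlinarith [le_abs_self (Real.log u), abs_nonneg (Real.log v)]
      linarith
    have hlower : -(|Real.log u| + |Real.log v|) ≤ α₁ * Real.log u + α₂ * Real.log v := by
      nlinarith [neg_abs_le (Real.log u), neg_abs_le (Real.log v), abs_nonneg (Real.log u),
        abs_nonneg (Real.log v), mul_le_mul_of_nonneg_left (neg_abs_le (Real.log u)) hα₁.le,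
        mul_le_mul_of_nonneg_left (neg_abs_le (Real.log v)) hα₂.le]
    rw [hw]
    exact ⟨hconc, abs_le.2 ⟨by linarith, hupper⟩⟩
  -- Part 3: integrability of pN * |log(1 + combination)|
  have part3 : Integrable (fun n => pN n * |Real.log (1 + (α₁ * g₁' n + α₂ * g₂' n))|) μ := by
    refine Integrable.mono' (hi₁.add hi₂)
      (hpm.aemeasurable.mul (measurable_abs.comp_aemeasurable hlogc)).aestronglyMeasurable ?_
    filter_upwards [hlogkey] with n hn
    rw [Real.norm_eq_abs, abs_mul, abs_abs, abs_of_nonneg (hpnn n)]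
    calc pN n * |Real.log (1 + (α₁ * g₁' n + α₂ * g₂' n))|
        ≤ pN n * (|Real.log (1 + g₁' n)| + |Real.log (1 + g₂' n)|) :=
          mul_le_mul_of_nonneg_left hn.2 (hpnn n)
      _ = pN n * |Real.log (1 + g₁' n)| + pN n * |Real.log (1 + g₂' n)| := by ring
  have hintc' : Integrable (fun n => pN n * Real.log (1 + (α₁ * g₁' n + α₂ * g₂' n))) μ := by
    refine Integrable.mono' part3 (hpm.aemeasurable.mul hlogc).aestronglyMeasurable
      (ae_of_all _ fun n => le_of_eq (habs_eq (fun n => 1 + (α₁ * g₁' n + α₂ * g₂' n)) n))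
  -- Part 4: concavity of the entropy functional
  have part4 : α₁ * (∫ n in eIoo a b, pN n * Real.log (1 + g₁' n)) +
      α₂ * (∫ n in eIoo a b, pN n * Real.log (1 + g₂' n)) ≤
      ∫ n in eIoo a b, pN n * Real.log (1 + (α₁ * g₁' n + α₂ * g₂' n)) := by
    have h1 : α₁ * (∫ n in eIoo a b, pN n * Real.log (1 + g₁' n)) +
        α₂ * (∫ n in eIoo a b, pN n * Real.log (1 + g₂' n)) =
        ∫ n in eIoo a b, (α₁ * (pN n * Real.log (1 + g₁' n)) +
          α₂ * (pN n * Real.log (1 + g₂' n))) := by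
      rw [integral_add (hint₁.const_mul α₁) (hint₂.const_mul α₂), integral_const_mul,
        integral_const_mul]
    rw [h1]
    refine integral_mono_ae ((hint₁.const_mul α₁).add (hint₂.const_mul α₂)) hintc' ?_
    filter_upwards [hlogkey] with n hn
    have := mul_le_mul_of_nonneg_left hn.1 (hpnn n)
    calc α₁ * (pN n * Real.log (1 + g₁' n)) + α₂ * (pN n * Real.log (1 + g₂' n))
        = pN n * (α₁ * Real.log (1 + g₁' n) + α₂ * Real.log (1 + g₂' n)) := by ring
      _ ≤ pN n * Real.log (1 + (α₁ * g₁' n + α₂ * g₂' n)) := this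
  exact ⟨part1, ⟨hintc, hcostle⟩, part3, part4⟩
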